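/- Let K ⊆ L be finite fields with [L:K] = k, and let n ≥ 2. Consider the action of GL_n(K) on the space Lⁿ of column vectors, where g ∈ GL_n(K) acts by multiplication by the matrix obtained from g by mapping its entries into L. Then the minimal size of a base for this action is ⌈n/k⌉: there exists a set of ⌈n/k⌉ vectors of Lⁿ whose common stabilizer in GL_n(K) is trivial, and every subset of Lⁿ of size less than ⌈n/k⌉ is fixed pointwise by some non-identity element of GL_n(K). -/

import Mathlib

section Aux

variable {K L : Type*} [Field K] [Field L] [Algebra K L]

lemma repr_mulVec {n : ℕ} {ι : Type*} [Fintype ι] (b : Module.Basis ι K L)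
    (g : Matrix (Fin n) (Fin n) K) (v : Fin n → L) (i : Fin n) (t : ι) :
    b.repr ((g.map (algebraMap K L)).mulVec v i) t
      = g.mulVec (fun x => b.repr (v x) t) i := by
  have : (g.map (algebraMap K L)).mulVec v i = ∑ x, (g i x) • v x := by
    simp [Matrix.mulVec, dotProduct, Matrix.map_apply, Algebra.smul_def]
  rw [this, map_sum, Finsupp.finset_sum_apply]
  simp [Matrix.mulVec, dotProduct]

lemma fix_iff {n : ℕ} {ι : Type*} [Fintype ι] (b : Module.Basis ι K L)
    (g : Matrix (Fin n) (Fin n) K) (v : Fin n → L) :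
    (g.map (algebraMap K L)).mulVec v = v
      ↔ ∀ t : ι, g.mulVec (fun x => b.repr (v x) t) = fun x => b.repr (v x) t := by
  constructor
  · intro h t
    funext i
    rw [← repr_mulVec b g v i t, h]
  · intro h
    funext i
    apply b.repr.injective
    ext t
    rw [repr_mulVec b g v i t, h t]

end Aux

theorem stmt15 {K L : Type*} [Field K] [Fintype K] [Field L] [Fintype L] [Algebra K L]
    (k n : ℕ) (hk : Module.finrank K L = k) (hn : 2 ≤ n) :
    (∃ S : Finset (Fin n → L), S.card = n ⌈/⌉ k ∧
      ∀ g : Matrix.GeneralLinearGroup (Fin n) K,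
        (∀ v ∈ S, ((g : Matrix (Fin n) (Fin n) K).map (algebraMap K L)).mulVec v = v) →
        g = 1) ∧
    (∀ S : Finset (Fin n → L), S.card < n ⌈/⌉ k →
      ∃ g : Matrix.GeneralLinearGroup (Fin n) K, g ≠ 1 ∧
        ∀ v ∈ S, ((g : Matrix (Fin n) (Fin n) K).map (algebraMap K L)).mulVec v = v) := by
  have hk0 : 0 < k := hk ▸ Module.finrank_pos
  set m := n ⌈/⌉ k with hm
  have hm_eq : m = (n + k - 1) / k := Nat.ceilDiv_eq_add_pred_div n k
  -- arithmetic facts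
  have hjk : ∀ j : ℕ, j < m → j * k < n := by
    intro j hj
    have h1 : j + 1 ≤ (n + k - 1) / k := by omega
    have h2 : (j + 1) * k ≤ n + k - 1 := (Nat.le_div_iff_mul_le hk0).mp h1
    have : j * k + k = (j + 1) * k := by ring
    omega
  have hdiv : ∀ x : ℕ, x < n → x / k < m := by
    intro x hx
    have h1 : x / k ≤ (n - 1) / k := Nat.div_le_div_right (by omega)
    have h2 : (n - 1 + k) / k = (n - 1) / k + 1 := Nat.add_div_right _ hk0
    have h3 : n + k - 1 = n - 1 + k := by omega
    have h4 : m = (n - 1) / k + 1 := by rw [hm_eq, h3, h2]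
    omega
  classical
  let b : Module.Basis (Fin k) K L := (Module.finBasis K L).reindex (finCongr hk)
  constructor
  · -- existence of a base of size m
    let f : Fin m → (Fin n → L) := fun j i =>
      if (i : ℕ) / k = (j : ℕ) then b ⟨(i : ℕ) % k, Nat.mod_lt _ hk0⟩ else 0
    have hf_inj : Function.Injective f := by
      intro j j' hjj
      by_contra hne
      have hix : (j : ℕ) * k < n := hjk _ j.2
      have := congrFun hjj ⟨(j : ℕ) * k, hix⟩
      have hd : ((j : ℕ) * k) / k = (j : ℕ) := Nat.mul_div_cancel _ hk0
      have hd' : ((j : ℕ) * k) / k ≠ (j' : ℕ) := by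
        rw [hd]; exact fun h => hne (Fin.ext h)
      simp only [f, hd, if_pos rfl, if_neg hd'] at this
      exact b.ne_zero _ this
    refine ⟨Finset.image f Finset.univ, by
      rw [Finset.card_image_of_injective _ hf_inj, Finset.card_univ, Fintype.card_fin], ?_⟩
    intro g hg
    apply Units.ext
    ext i x
    -- use the vector f (x/k)
    have hxm : (x : ℕ) / k < m := hdiv _ x.2
    have hgx := hg (f ⟨(x : ℕ) / k, hxm⟩) (Finset.mem_image_of_mem f (Finset.mem_univ _))
    rw [fix_iff b] at hgx
    have hxk : (x : ℕ) % k < k := Nat.mod_lt _ hk0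
    have hgt := hgx ⟨(x : ℕ) % k, hxk⟩
    -- the coordinate vector is the standard basis vector at x
    have hw : (fun y : Fin n => b.repr (f ⟨(x : ℕ) / k, hxm⟩ y) (⟨(x : ℕ) % k, hxk⟩ : Fin k))
        = Pi.single x (1 : K) := by
      funext y
      simp only [f]
      by_cases hy : (y : ℕ) / k = (x : ℕ) / k
      · rw [if_pos hy, b.repr_self, Finsupp.single_apply]
        by_cases hy2 : (y : ℕ) % k = (x : ℕ) % k
        · have hyx : y = x := by
            apply Fin.ext
            conv_lhs => rw [← Nat.div_add_mod (y : ℕ) k]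
            rw [hy, hy2, Nat.div_add_mod]
          have hc : (⟨(y : ℕ) % k, Nat.mod_lt _ hk0⟩ : Fin k) = ⟨(x : ℕ) % k, hxk⟩ :=
            Fin.ext hy2
          rw [if_pos hc, hyx, Pi.single_eq_same]
        · have hyx : y ≠ x := fun h => hy2 (by rw [h])
          rw [if_neg (fun h => hy2 (congrArg Fin.val h))]
          simp [Pi.single_apply, hyx]
      · rw [if_neg hy]
        have hyx : y ≠ x := fun h => hy (by rw [h])
        simp [Pi.single_apply, hyx]
    rw [hw, Matrix.mulVec_single] at hgt
    have := congrFun hgt i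
    simp only [mul_one, Pi.single_apply] at this
    rw [Units.val_one, Matrix.one_apply]
    simpa using this
  · -- lower bound
    intro S hS
    -- the span of all coordinate vectors
    let F : (S × Fin k) → (Fin n → K) := fun p x => b.repr ((p.1 : Fin n → L) x) p.2
    let W : Submodule K (Fin n → K) := Submodule.span K (Set.range F)
    have hWrange : W = LinearMap.range (Fintype.linearCombination K F) :=
      (Fintype.range_linearCombination K F).symm
    have hWrank : Module.finrank K W < n := by
      have h1 : Module.finrank K W ≤ Module.finrank K ((S × Fin k) → K) := by
        rw [hWrange]; exact LinearMap.finrank_range_le _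
      have h2 : Module.finrank K ((S × Fin k) → K) = S.card * k := by
        rw [Module.finrank_pi, Fintype.card_prod, Fintype.card_coe, Fintype.card_fin]
      have h3 : S.card * k < n := hjk _ hS
      omega
    have hWlt : W < ⊤ := by
      refine lt_top_iff_ne_top.mpr fun h => ?_
      rw [h, finrank_top, Module.finrank_pi, Fintype.card_fin] at hWrank
      omega
    obtain ⟨φ, hφ0, hφW⟩ := Submodule.exists_dual_map_eq_bot_of_lt_top hWlt inferInstance
    have hker : ∀ w ∈ W, φ w = 0 := by
      intro w hw
      have : φ w ∈ Submodule.map φ W := Submodule.mem_map_of_mem hw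
      rwa [hφW, Submodule.mem_bot] at this
    -- find a nonzero element of ker φ
    have hkerrank : 0 < Module.finrank K (LinearMap.ker φ) := by
      have h1 := LinearMap.finrank_range_add_finrank_ker φ
      have h2 : Module.finrank K (LinearMap.range φ) ≤ Module.finrank K K :=
        Submodule.finrank_le _
      rw [Module.finrank_self] at h2
      rw [Module.finrank_pi, Fintype.card_fin] at h1
      omega
    have hkerne : LinearMap.ker φ ≠ ⊥ := by
      intro h
      rw [h] at hkerrank
      simp [finrank_bot] at hkerrank
    obtain ⟨u, hu_mem, hu0⟩ := (Submodule.ne_bot_iff _).mp hkerne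
    -- the coefficients of φ
    let c : Fin n → K := fun j => φ (Pi.single j 1)
    have hφ_eq : ∀ w : Fin n → K, φ w = ∑ j, w j * c j := by
      intro w
      have hw : w = ∑ j, w j • (Pi.single j 1 : Fin n → K) := by
        conv_lhs => rw [← Finset.univ_sum_single w]
        refine Finset.sum_congr rfl fun j _ => ?_
        rw [← Pi.single_smul, smul_eq_mul, mul_one]
      calc φ w = φ (∑ j, w j • (Pi.single j 1 : Fin n → K)) := by rw [← hw]
        _ = ∑ j, w j * c j := by rw [map_sum]; simp [c, smul_eq_mul]
    have hc0 : ∃ j, c j ≠ 0 := by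
      by_contra h
      push_neg at h
      apply hφ0
      apply LinearMap.ext
      intro w
      rw [hφ_eq]
      simp [h]
    obtain ⟨j0, hj0⟩ := hc0
    obtain ⟨i0, hi0⟩ : ∃ i, u i ≠ 0 := by
      by_contra h
      push_neg at h
      exact hu0 (funext h)
    have hφu : ∑ j, u j * c j = 0 := by
      rw [← hφ_eq]
      exact LinearMap.mem_ker.mp hu_mem
    -- the transvection-like matrix
    let E : Matrix (Fin n) (Fin n) K := Matrix.of (fun i j => u i * c j)
    have hE2 : E * E = 0 := by
      ext i j
      rw [Matrix.mul_apply]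
      have : ∀ x, E i x * E x j = (u i * c j) * (u x * c x) := by
        intro x; simp only [E, Matrix.of_apply]; ring
      rw [Finset.sum_congr rfl (fun x _ => this x), ← Finset.mul_sum]
      have : ∑ x, u x * c x = 0 := hφu
      rw [this, mul_zero, Matrix.zero_apply]
    have h1 : (1 + E) * (1 - E) = 1 := by
      rw [mul_sub, mul_one, add_mul, one_mul, hE2, add_zero, add_sub_cancel_right]
    have h2 : (1 - E) * (1 + E) = 1 := by
      rw [sub_mul, one_mul, mul_add, mul_one, hE2, add_zero, add_sub_cancel_right]
    refine ⟨⟨1 + E, 1 - E, h1, h2⟩, ?_, ?_⟩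
    · intro hg1
      have hval : (1 + E : Matrix (Fin n) (Fin n) K) = 1 := congrArg Units.val hg1
      have := congrFun (congrFun hval i0) j0
      rw [Matrix.add_apply] at this
      have hEij : E i0 j0 = 0 := add_eq_left.mp this
      exact mul_ne_zero hi0 hj0 hEij
    · intro v hv
      rw [fix_iff b]
      intro t
      set w : Fin n → K := fun x => b.repr (v x) t with hwdef
      have hwW : w ∈ W := Submodule.subset_span ⟨(⟨⟨v, hv⟩, t⟩ : S × Fin k), rfl⟩
      have hφw : ∑ j, w j * c j = 0 := by rw [← hφ_eq]; exact hker w hwW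
      show (1 + E).mulVec w = w
      rw [Matrix.add_mulVec, Matrix.one_mulVec]
      have : E.mulVec w = 0 := by
        funext i
        simp only [Matrix.mulVec, dotProduct, E, Matrix.of_apply]
        have : ∀ x, u i * c x * w x = u i * (w x * c x) := fun x => by ring
        rw [Finset.sum_congr rfl (fun x _ => this x), ← Finset.mul_sum, hφw, mul_zero]
        rfl
      rw [this, add_zero]
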